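/- Suppose R is a principal ideal domain, a_1 ≠ 0, 1 < m ≤ n, and Ra_1 + ⋯ + Ra_m = R. Then there exist matrices X ∈ M_{m−1}(R) and Y ∈ M_{(m−1)×(n−m)}(R) such that X is upper triangular with diagonal entries a_1/(a_1,a_2), (a_1,a_2)/(a_1,a_2,a_3), …, (a_1,…,a_{m−2})/(a_1,…,a_{m−1}), (a_1,…,a_{m−1}) (in this order), and the columns of the block matrix A = [[X, Y],[0, I_{n−m}]] ∈ M_{n−1}(R) are the coordinates, relative to w(1,2),…,w(1,n), of vectors z_2,…,z_n forming an R-basis of S. -/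

import Mathlib

/-- Theorem `basis`: taking `M = {a₁,…,a_m}` with `Ra₁+⋯+Ra_m = R`,
`a₁ ≠ 0` and `1 < m ≤ n`, there are matrices `X ∈ M_{m−1}(R)`,
`Y ∈ M_{(m−1)×(n−m)}(R)` with `X` upper triangular with diagonal entries
`a₁/(a₁,a₂), (a₁,a₂)/(a₁,a₂,a₃), …, (a₁,…,a_{m−2})/(a₁,…,a_{m−1}),
(a₁,…,a_{m−1})`, such that the columns of `A = [[X,Y],[0,I]]` are the
coordinates, relative to `w(1,2),…,w(1,n)`, of an `R`-basis `z₂,…,zₙ` of `S`.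
Here `n = N + 1`, `g t` is a gcd of `a₁,…,a_{t+1}` with `g 0 = a₁`, and the
diagonal conditions are expressed by exact-division identities. -/
theorem stmt_12 {R : Type*} [CommRing R] [IsDomain R] [IsPrincipalIdealRing R]
    {K : Type*} [Field K] [Algebra R K] [IsFractionRing R K]
    {N : ℕ} (hN : 1 ≤ N) (a : Fin (N + 1) → R)
    (huni : Ideal.span (Set.range a) = ⊤) (ha1 : a 0 ≠ 0)
    (mM : ℕ) (hm1 : 1 < mM) (hmn : mM ≤ N + 1)
    (hMuni : Ideal.span {x | ∃ i : Fin (N + 1), (i : ℕ) < mM ∧ x = a i} = ⊤)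
    (g : ℕ → R) (hg0 : g 0 = a 0)
    (hg : ∀ t, Ideal.span {g t} =
      Ideal.span {x | ∃ i : Fin (N + 1), (i : ℕ) ≤ t ∧ x = a i})
    (SF : Submodule R (Fin (N + 1) → K))
    (hSF : ∀ x, x ∈ SF ↔ (∀ i, ∃ r : R, algebraMap R K r = x i) ∧
      ∑ i, algebraMap R K (a i) * x i = 0)
    (w : Fin N → Fin (N + 1) → K)
    (hw : ∀ j k, w j k =
      if k = 0 then -(algebraMap R K (a j.succ)) / algebraMap R K (a 0)
      else if k = j.succ then 1 else 0) :
    ∃ A : Matrix (Fin N) (Fin N) R,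
      (∀ i j : Fin N, (j : ℕ) < mM - 1 → j < i → A i j = 0) ∧
      (∀ i : Fin N, (i : ℕ) < mM - 2 → A i i * g ((i : ℕ) + 1) = g (i : ℕ)) ∧
      (∀ i : Fin N, (i : ℕ) = mM - 2 → A i i = g (mM - 2)) ∧
      (∀ i j : Fin N, mM - 1 ≤ (i : ℕ) → mM - 1 ≤ (j : ℕ) →
        A i j = if i = j then 1 else 0) ∧
      ∃ bS : Module.Basis (Fin N) R SF, ∀ j : Fin N,
        (bS j : Fin (N + 1) → K) = ∑ i, algebraMap R K (A i j) • w i := by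
  classical
  have hinj : Function.Injective (algebraMap R K) := IsFractionRing.injective R K
  have ha0K : algebraMap R K (a 0) ≠ 0 := fun h => ha1 (hinj (by simpa using h))
  set P : ℕ → Set R := fun t => {x | ∃ i : Fin (N + 1), (i : ℕ) ≤ t ∧ x = a i} with hP
  have hmemP : ∀ (t : ℕ) (i : Fin (N + 1)), (i : ℕ) ≤ t → a i ∈ Ideal.span (P t) :=
    fun t i hi => Ideal.subset_span ⟨i, hi, rfl⟩
  have hgP : ∀ t, Ideal.span {g t} = Ideal.span (P t) := hg
  have hMuni' : Ideal.span (P (mM - 1)) = ⊤ := by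
    rw [← hMuni]
    congr 1
    ext x
    constructor
    · rintro ⟨i, hi, rfl⟩; exact ⟨i, by omega, rfl⟩
    · rintro ⟨i, hi, rfl⟩; exact ⟨i, by omega, rfl⟩
  have hgdvd : ∀ (t : ℕ) (i : Fin (N + 1)), (i : ℕ) ≤ t → g t ∣ a i := by
    intro t i hi
    rw [← Ideal.mem_span_singleton, hgP t]
    exact hmemP t i hi
  have hgne : ∀ t, g t ≠ 0 := by
    intro t h
    have := hgdvd t 0 (Nat.zero_le t)
    rw [h, zero_dvd_iff] at this
    exact ha1 this
  have hgsucc : ∀ t, g (t + 1) ∣ g t := by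
    intro t
    rw [← Ideal.mem_span_singleton, hgP (t + 1)]
    have h1 : g t ∈ Ideal.span (P t) := by
      rw [← hgP]; exact Ideal.subset_span (Set.mem_singleton _)
    refine Ideal.span_mono ?_ h1
    rintro x ⟨i, hi, rfl⟩
    exact ⟨i, by omega, rfl⟩
  have hpairP : ∀ j : Fin N,
      Ideal.span {g (j : ℕ), a j.succ} = Ideal.span (P ((j : ℕ) + 1)) := by
    intro j
    have hsetu : P ((j : ℕ) + 1) = P (j : ℕ) ∪ {a j.succ} := by
      ext x
      constructor
      · rintro ⟨i, hi, rfl⟩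
        rcases Nat.lt_or_ge (i : ℕ) ((j : ℕ) + 1) with h | h
        · exact Or.inl ⟨i, by omega, rfl⟩
        · have : i = j.succ := by
            apply Fin.ext
            simp only [Fin.val_succ]
            omega
          exact Or.inr (by rw [this]; rfl)
      · rintro (⟨i, hi, rfl⟩ | h)
        · exact ⟨i, by omega, rfl⟩
        · exact ⟨j.succ, by simp [Fin.val_succ], h⟩
    rw [show ({g (j : ℕ), a j.succ} : Set R) = {g (j : ℕ)} ∪ {a j.succ} from rfl,
      Ideal.span_union, hgP, ← Ideal.span_union, ← hsetu]
  have spanlem : ∀ (t : ℕ) (x : R), x ∈ Ideal.span (P t) →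
      ∃ c : Fin (N + 1) → R, (∀ i : Fin (N + 1), t < (i : ℕ) → c i = 0) ∧
        ∑ i, c i * a i = x := by
    intro t x hx
    have hsub : Ideal.span (P t) ≤
        Ideal.span (Set.range fun i : Fin (N + 1) => if (i : ℕ) ≤ t then a i else 0) := by
      refine Ideal.span_mono ?_
      rintro y ⟨i, hi, rfl⟩
      exact ⟨i, by simp [hi]⟩
    have hx2 : x ∈ Submodule.span R
        (Set.range fun i : Fin (N + 1) => if (i : ℕ) ≤ t then a i else 0) := hsub hx
    rw [Submodule.mem_span_range_iff_exists_fun] at hx2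
    obtain ⟨c, hc⟩ := hx2
    refine ⟨fun i => if (i : ℕ) ≤ t then c i else 0, ?_, ?_⟩
    · intro i hi
      show (if (i : ℕ) ≤ t then c i else 0) = 0
      rw [if_neg (by omega : ¬ (i : ℕ) ≤ t)]
    rw [← hc]
    refine Finset.sum_congr rfl fun i _ => ?_
    by_cases h : (i : ℕ) ≤ t <;> simp [h, smul_eq_mul]
  -- the "target degree" of column j
  set τ : Fin N → ℕ := fun j => min (j : ℕ) (mM - 1) with hτdef
  have hτj : ∀ j, τ j ≤ (j : ℕ) := fun j => Nat.min_le_left _ _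
  have hτm : ∀ j, τ j ≤ mM - 1 := fun j => Nat.min_le_right _ _
  -- diagonal entries
  have hd_ex : ∀ j : Fin N, ∃ dj : R,
      ((j : ℕ) < mM - 2 → dj * g ((j : ℕ) + 1) = g (j : ℕ)) ∧
      ((j : ℕ) = mM - 2 → dj = g (mM - 2)) ∧
      (mM - 1 ≤ (j : ℕ) → dj = 1) ∧ dj ≠ 0 ∧
      a j.succ * dj ∈ Ideal.span (P (τ j)) := by
    intro j
    rcases lt_trichotomy ((j : ℕ)) (mM - 2) with hj | hj | hj
    · obtain ⟨dj, hdj⟩ := hgsucc (j : ℕ)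
      have hτ : τ j = (j : ℕ) := min_eq_left (by omega)
      obtain ⟨a', ha'⟩ := hgdvd ((j : ℕ) + 1) j.succ (le_of_eq (Fin.val_succ j))
      refine ⟨dj, fun _ => by rw [mul_comm]; exact hdj.symm,
        fun h => absurd h (by omega), fun h => absurd h (by omega), ?_, ?_⟩
      · intro h0
        exact hgne (j : ℕ) (by rw [hdj, h0, mul_zero])
      · rw [hτ, ← hgP, Ideal.mem_span_singleton]
        exact ⟨a', by rw [ha', hdj]; ring⟩
    · have hτ : τ j = (j : ℕ) := min_eq_left (by omega)
      refine ⟨g (mM - 2), fun h => absurd h (by omega), fun _ => rfl,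
        fun h => absurd h (by omega), hgne _, ?_⟩
      rw [hτ, ← hgP, Ideal.mem_span_singleton, ← hj]
      exact dvd_mul_left _ _
    · have hτ : τ j = mM - 1 := min_eq_right (by omega)
      refine ⟨1, fun h => absurd h (by omega), fun h => absurd h (by omega),
        fun _ => rfl, one_ne_zero, ?_⟩
      rw [hτ, hMuni']
      exact Submodule.mem_top
  choose d hd1 hd2 hd3 hdne hdmem using hd_ex
  have he_ex : ∀ j : Fin N, ∃ c : Fin (N + 1) → R,
      (∀ i : Fin (N + 1), τ j < (i : ℕ) → c i = 0) ∧ ∑ i, c i * a i = a j.succ * d j :=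
    fun j => spanlem _ _ (hdmem j)
  choose e he0 hesum using he_ex
  have hez : ∀ j i : Fin N, ((j : ℕ) ≤ (i : ℕ) ∨ mM - 1 ≤ (i : ℕ)) → e j i.succ = 0 := by
    intro j i hi
    apply he0
    have h1 := hτj j
    have h2 := hτm j
    rw [Fin.val_succ]
    omega
  -- the matrix
  set A : Matrix (Fin N) (Fin N) R :=
    Matrix.of (fun i j => (if i = j then d j else 0) - e j i.succ) with hA
  have hAapp : ∀ i j, A i j = (if i = j then d j else 0) - e j i.succ := fun i j => rfl
  have htri : ∀ i j : Fin N, j < i → A i j = 0 := by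
    intro i j hij
    rw [hAapp, if_neg (ne_of_gt hij), hez j i (Or.inl (le_of_lt hij)), sub_zero]
  have hdiag : ∀ i : Fin N, A i i = d i := by
    intro i
    rw [hAapp, if_pos rfl, hez i i (Or.inl le_rfl), sub_zero]
  have hsum : ∀ j : Fin N, ∑ i : Fin N, a i.succ * A i j = e j 0 * a 0 := by
    intro j
    have h1 : ∑ i : Fin (N + 1), e j i * a i
        = e j 0 * a 0 + ∑ i : Fin N, e j i.succ * a i.succ := Fin.sum_univ_succ _
    have h2 : ∀ i : Fin N, a i.succ * A i j
        = (if i = j then a j.succ * d j else 0) - e j i.succ * a i.succ := by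
      intro i
      rw [hAapp]
      split_ifs with h
      · subst h; ring
      · ring
    rw [Finset.sum_congr rfl fun i _ => h2 i, Finset.sum_sub_distrib,
      Finset.sum_ite_eq' Finset.univ j (fun _ => a j.succ * d j),
      if_pos (Finset.mem_univ j)]
    have h3 : ∑ i : Fin N, e j i.succ * a i.succ = a j.succ * d j - e j 0 * a 0 := by
      rw [← hesum j, h1]; ring
    rw [h3]; ring
  have hdet : A.det ≠ 0 := by
    have hBT : A.BlockTriangular id := fun i j hij => htri i j hij
    rw [Matrix.det_of_upperTriangular hBT]
    simp only [hdiag]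
    exact Finset.prod_ne_zero_iff.mpr fun i _ => hdne i
  have hAinj : ∀ c : Fin N → R, A.mulVec c = 0 → c = 0 := by
    intro c hc
    have h1 : A.adjugate.mulVec (A.mulVec c) = A.adjugate.mulVec 0 := by rw [hc]
    rw [Matrix.mulVec_mulVec, Matrix.adjugate_mul, Matrix.mulVec_zero,
      Matrix.smul_mulVec, Matrix.one_mulVec] at h1
    funext i
    have h2 := congrFun h1 i
    simp only [Pi.smul_apply, smul_eq_mul, Pi.zero_apply] at h2
    exact (mul_eq_zero.mp h2).resolve_left hdet
  have hσA : ∀ c : Fin N → R,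
      ∑ i : Fin N, a i.succ * A.mulVec c i = ∑ j : Fin N, e j 0 * c j * a 0 := by
    intro c
    simp only [Matrix.mulVec, dotProduct]
    calc ∑ i : Fin N, a i.succ * ∑ j, A i j * c j
        = ∑ i : Fin N, ∑ j, a i.succ * A i j * c j := by
          refine Finset.sum_congr rfl fun i _ => ?_
          rw [Finset.mul_sum]
          exact Finset.sum_congr rfl fun j _ => by ring
      _ = ∑ j : Fin N, ∑ i, a i.succ * A i j * c j := Finset.sum_comm
      _ = ∑ j : Fin N, e j 0 * c j * a 0 := by
          refine Finset.sum_congr rfl fun j _ => ?_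
          rw [← Finset.sum_mul, hsum j]
          ring
  have hσdvd : ∀ c : Fin N → R, a 0 ∣ ∑ i : Fin N, a i.succ * A.mulVec c i := by
    intro c
    rw [hσA]
    exact Finset.dvd_sum fun j _ => dvd_mul_left _ _
  -- entry computations
  have hw0 : ∀ v : Fin N → R, (∑ i, v i • w i) 0
      = -(algebraMap R K (∑ i, a i.succ * v i)) / algebraMap R K (a 0) := by
    intro v
    have h1 : (∑ i, v i • w i) 0 = ∑ i, v i • w i 0 := by simp
    have h2 : ∀ i : Fin N, v i • w i 0
        = -(algebraMap R K (a i.succ * v i)) / algebraMap R K (a 0) := by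
      intro i
      rw [hw i 0, if_pos rfl, Algebra.smul_def, map_mul]
      ring
    rw [h1, Finset.sum_congr rfl fun i _ => h2 i, ← Finset.sum_div,
      Finset.sum_neg_distrib, ← map_sum]
  have hwsucc : ∀ (v : Fin N → R) (j : Fin N),
      (∑ i, v i • w i) j.succ = algebraMap R K (v j) := by
    intro v j
    have h1 : (∑ i, v i • w i) j.succ = ∑ i, v i • w i j.succ := by simp
    rw [h1, Finset.sum_eq_single j]
    · rw [hw j j.succ, if_neg (Fin.succ_ne_zero j), if_pos rfl, Algebra.smul_def, mul_one]
    · intro i _ hij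
      rw [hw i j.succ, if_neg (Fin.succ_ne_zero j),
        if_neg (fun h => hij (Fin.succ_inj.mp h).symm), smul_zero]
    · intro h; exact absurd (Finset.mem_univ j) h
  have hmemSF : ∀ v : Fin N → R, a 0 ∣ (∑ i, a i.succ * v i) → (∑ i, v i • w i) ∈ SF := by
    rintro v ⟨r, hr⟩
    rw [hSF]
    constructor
    · intro k
      induction k using Fin.cases with
      | zero =>
        refine ⟨-r, ?_⟩
        rw [hw0 v, hr, map_neg, map_mul]
        field_simp
        try ring
      | succ j => exact ⟨v j, (hwsucc v j).symm⟩
    · rw [Fin.sum_univ_succ]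
      have h4 : ∀ j : Fin N, algebraMap R K (a j.succ) * (∑ i, v i • w i) j.succ
          = algebraMap R K (a j.succ * v j) := by
        intro j
        rw [hwsucc, map_mul]
      rw [Finset.sum_congr rfl fun j _ => h4 j, ← map_sum, hw0 v, hr]
      field_simp
      try ring
  have hsurj : ∀ x, x ∈ SF → ∃ v : Fin N → R,
      (a 0 ∣ ∑ i, a i.succ * v i) ∧ (∑ i, v i • w i) = x := by
    intro x hx
    rw [hSF] at hx
    obtain ⟨hx1, hx2⟩ := hx
    choose r hr using hx1
    have hR : a 0 * r 0 + ∑ i : Fin N, a i.succ * r i.succ = 0 := by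
      apply hinj
      rw [map_add, map_zero, map_mul, map_sum, ← hx2, Fin.sum_univ_succ]
      congr 1
      · rw [hr 0]
      · refine Finset.sum_congr rfl fun j _ => ?_
        rw [map_mul, hr j.succ]
    refine ⟨fun j => r j.succ, ⟨-(r 0), by linear_combination hR⟩, ?_⟩
    funext k
    induction k using Fin.cases with
    | zero =>
      rw [hw0]
      have h5 : algebraMap R K (∑ i : Fin N, a i.succ * r i.succ)
          = -(algebraMap R K (a 0) * x 0) := by
        rw [← hr 0, ← map_mul, ← map_neg]
        congr 1
        linear_combination hR
      rw [h5, neg_neg, mul_div_cancel_left₀ _ ha0K]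
    | succ j =>
      rw [hwsucc]
      exact hr j.succ
  -- the induction producing preimages under mulVec
  have hind : ∀ (k : ℕ) (c : Fin N → R), (a 0 ∣ ∑ i, a i.succ * c i) →
      (∀ i : Fin N, k ≤ (i : ℕ) → c i = 0) → ∃ y, A.mulVec y = c := by
    intro k
    induction k with
    | zero =>
      intro c _ hz
      exact ⟨0, by rw [Matrix.mulVec_zero]; funext i; exact (hz i (Nat.zero_le _)).symm⟩
    | succ k ih =>
      intro c hdvd hz
      by_cases hk : k < N
      · set kk : Fin N := ⟨k, hk⟩ with hkk
        have hkv : (kk : ℕ) = k := rfl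
        have hmem_k : a kk.succ * c kk ∈ Ideal.span (P k) := by
          have hsplit : ∑ i : Fin N, a i.succ * c i
              = a kk.succ * c kk + ∑ i ∈ Finset.univ.erase kk, a i.succ * c i :=
            (Finset.add_sum_erase _ _ (Finset.mem_univ kk)).symm
          have hrest : ∑ i ∈ Finset.univ.erase kk, a i.succ * c i ∈ Ideal.span (P k) := by
            refine Ideal.sum_mem _ fun i hi => ?_
            rcases Nat.lt_trichotomy (i : ℕ) k with h | h | h
            · exact Ideal.mul_mem_right _ _ (hmemP k i.succ (by rw [Fin.val_succ]; omega))
            · exact absurd (Fin.ext h : i = kk) (Finset.ne_of_mem_erase hi)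
            · rw [hz i (by omega), mul_zero]; exact Ideal.zero_mem _
          have htot : (∑ i : Fin N, a i.succ * c i) ∈ Ideal.span (P k) := by
            obtain ⟨mm, hmm⟩ := hdvd
            rw [hmm]
            exact Ideal.mul_mem_right _ _ (hmemP k 0 (Nat.zero_le _))
          have h6 := Ideal.sub_mem _ htot hrest
          rwa [hsplit, add_sub_cancel_right] at h6
        have hdvd_ck : A kk kk ∣ c kk := by
          by_cases hk2 : mM - 1 ≤ k
          · rw [hdiag, hd3 kk hk2]
            exact one_dvd _
          · have hgk : g k ∣ a kk.succ * c kk := by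
              rw [← Ideal.mem_span_singleton, hgP]
              exact hmem_k
            rcases Nat.lt_or_ge k (mM - 2) with hk3 | hk3
            · obtain ⟨a', ha'⟩ := hgdvd (k + 1) kk.succ (le_of_eq (Fin.val_succ kk))
              have hgmem : g (k + 1) ∈ Ideal.span {g (k : ℕ), a kk.succ} := by
                rw [hpairP kk, ← hgP]
                exact Ideal.subset_span (Set.mem_singleton _)
              obtain ⟨u, v, huv⟩ := Ideal.mem_span_pair.mp hgmem
              have hd1k : d kk * g (k + 1) = g k := hd1 kk hk3
              have hcop : IsCoprime (d kk) a' := by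
                refine ⟨u, v, ?_⟩
                have hc : g (k + 1) * (u * d kk + v * a') = g (k + 1) * 1 := by
                  rw [mul_one]
                  calc g (k + 1) * (u * d kk + v * a')
                      = u * (d kk * g (k + 1)) + v * (g (k + 1) * a') := by ring
                    _ = u * g (k : ℕ) + v * a kk.succ := by rw [hd1k, ← ha']
                    _ = g (k + 1) := huv
                exact mul_left_cancel₀ (hgne (k + 1)) hc
              have h5 : g (k : ℕ) ∣ g (k + 1) * (a' * c kk) := by
                rw [show g (k + 1) * (a' * c kk) = (g (k + 1) * a') * c kk from by ring, ← ha']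
                exact hgk
              rw [← hd1k, mul_comm (d kk) (g (k + 1))] at h5
              have h7 : d kk ∣ a' * c kk := (mul_dvd_mul_iff_left (hgne (k + 1))).mp h5
              rw [hdiag]
              exact hcop.dvd_of_dvd_mul_left h7
            · have hk4 : k = mM - 2 := by omega
              have htop : Ideal.span {g (k : ℕ), a kk.succ} = ⊤ := by
                rw [hpairP kk, hkv, show k + 1 = mM - 1 from by omega, hMuni']
              obtain ⟨u, v, huv⟩ := Ideal.mem_span_pair.mp (htop ▸ Submodule.mem_top :
                (1 : R) ∈ Ideal.span {g (k : ℕ), a kk.succ})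
              have hcop : IsCoprime (g (k : ℕ)) (a kk.succ) := ⟨u, v, huv⟩
              rw [hdiag, hd2 kk hk4, show mM - 2 = k from hk4.symm]
              exact hcop.dvd_of_dvd_mul_left hgk
        obtain ⟨q, hq⟩ := hdvd_ck
        set c' : Fin N → R := fun i => c i - A i kk * q with hc'
        have hc'z : ∀ i : Fin N, k ≤ (i : ℕ) → c' i = 0 := by
          intro i hi
          rcases Nat.eq_or_lt_of_le hi with h | h
          · have hik : i = kk := Fin.ext h.symm
            rw [hc']
            simp only [hik]
            rw [hq]
            ring
          · rw [hc']
            simp only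
            rw [hz i (by omega), htri i kk (by exact h), zero_mul, sub_zero]
        have hc'dvd : a 0 ∣ ∑ i, a i.succ * c' i := by
          have hrw : ∑ i : Fin N, a i.succ * c' i
              = (∑ i, a i.succ * c i) - (∑ i, a i.succ * A i kk) * q := by
            rw [Finset.sum_mul, ← Finset.sum_sub_distrib]
            exact Finset.sum_congr rfl fun i _ => by rw [hc']; ring
          rw [hrw, hsum kk]
          exact dvd_sub hdvd ⟨e kk 0 * q, by ring⟩
        obtain ⟨y, hy⟩ := ih c' hc'dvd hc'z
        refine ⟨y + Pi.single kk q, ?_⟩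
        rw [Matrix.mulVec_add, hy, Matrix.mulVec_single]
        funext i
        simp only [Pi.add_apply, hc']
        simp only [Pi.smul_apply, Matrix.col_apply, op_smul_eq_mul]
        ring
      · exact ih c hdvd fun i h => absurd i.isLt (by omega)
  -- the linear map to SF
  have hmemA : ∀ c : Fin N → R, (∑ i, A.mulVec c i • w i) ∈ SF :=
    fun c => hmemSF _ (hσdvd c)
  set Ψ : (Fin N → R) →ₗ[R] SF :=
    { toFun := fun c => ⟨∑ i, A.mulVec c i • w i, hmemA c⟩
      map_add' := by
        intro c c'
        apply Subtype.ext
        show ∑ i, A.mulVec (c + c') i • w i = (∑ i, A.mulVec c i • w i) + ∑ i, A.mulVec c' i • w i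
        rw [Matrix.mulVec_add, ← Finset.sum_add_distrib]
        exact Finset.sum_congr rfl fun i _ => by rw [Pi.add_apply, add_smul]
      map_smul' := by
        intro r c
        apply Subtype.ext
        show ∑ i, A.mulVec (r • c) i • w i = r • ∑ i, A.mulVec c i • w i
        rw [Matrix.mulVec_smul, Finset.smul_sum]
        exact Finset.sum_congr rfl fun i _ => by rw [Pi.smul_apply, smul_assoc] } with hΨ
  have hΨval : ∀ c : Fin N → R, (Ψ c : Fin (N + 1) → K) = ∑ i, A.mulVec c i • w i :=
    fun c => rfl
  have hΨinj : Function.Injective Ψ := by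
    intro c c' hcc
    have h1 : (Ψ c : Fin (N + 1) → K) = (Ψ c' : Fin (N + 1) → K) := by rw [hcc]
    rw [hΨval, hΨval] at h1
    have h2 : A.mulVec c = A.mulVec c' := by
      funext j
      apply hinj
      have h3 := congrFun h1 j.succ
      rwa [hwsucc, hwsucc] at h3
    have h4 : A.mulVec (c - c') = 0 := by
      rw [Matrix.mulVec_sub, h2, sub_self]
    exact sub_eq_zero.mp (hAinj _ h4)
  have hΨsurj : Function.Surjective Ψ := by
    rintro ⟨x, hx⟩
    obtain ⟨v, hvd, hvx⟩ := hsurj x hx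
    obtain ⟨y, hy⟩ := hind N v hvd (fun i hi => absurd i.isLt (by omega))
    exact ⟨y, Subtype.ext (by rw [hΨval, hy]; exact hvx)⟩
  set eqv := LinearEquiv.ofBijective Ψ ⟨hΨinj, hΨsurj⟩ with heqv
  refine ⟨A, fun i j _ hij => htri i j hij,
    fun i hi => by rw [hdiag]; exact hd1 i hi,
    fun i hi => by rw [hdiag]; exact hd2 i hi,
    ?_, (Pi.basisFun R (Fin N)).map eqv, ?_⟩
  · intro i j hi hj
    by_cases h : i = j
    · subst h
      rw [hdiag, hd3 i hi, if_pos rfl]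
    · rw [if_neg h, hAapp, if_neg h, hez j i (Or.inr hi), sub_zero]
  · intro j
    rw [Module.Basis.map_apply, Pi.basisFun_apply]
    have h8 : eqv (Pi.single j 1) = Ψ (Pi.single j 1) := rfl
    rw [h8]
    rw [hΨval, Matrix.mulVec_single]
    refine Finset.sum_congr rfl fun i _ => ?_
    show (A i j * 1) • w i = _
    rw [mul_one, algebraMap_smul]
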